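/- Let E be a field and let a, n be positive integers with gcd(n, a) = 1. Let α be a field automorphism of E such that α^a = id and such that α fixes every element x ∈ E satisfying x^(2n) = 1. If f ∈ E is nonzero and α(f) ≠ f and α(f) ≠ -f, then α(f^n) ≠ f^n and α(f^n) ≠ -f^n. -/

import Mathlib

lemma stmt_0_aux (E : Type*) [Field E] (a n : ℕ) (ha : 0 < a) (hn : 0 < n)
    (hgcd : Nat.gcd n a = 1) (α : E ≃+* E) (hord : α ^ a = 1)
    (hfix : ∀ x : E, x ^ (2 * n) = 1 → α x = x)
    (f : E) (hf : f ≠ 0) (ε : E) (hε : ε ^ 2 = 1)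
    (heq : α (f ^ n) = ε * f ^ n) : α f = f ∨ α f = -f := by
  set ζ : E := α f / f with hζ
  have hfn : f ^ n ≠ 0 := pow_ne_zero _ hf
  have hζn : ζ ^ n = ε := by
    rw [hζ, div_pow, ← map_pow, heq, mul_div_assoc, div_self hfn, mul_one]
  have hζ2n : ζ ^ (2 * n) = 1 := by
    rw [mul_comm, pow_mul, hζn, hε]
  have hfixζ : α ζ = ζ := hfix ζ hζ2n
  have haf : α f = ζ * f := by rw [hζ, div_mul_cancel₀ (α f) hf]
  have hiter : ∀ k : ℕ, (α ^ k) f = ζ ^ k * f := by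
    intro k
    induction k with
    | zero => rw [pow_zero, pow_zero, one_mul]; rfl
    | succ k ih =>
      rw [pow_succ']
      show α ((α ^ k) f) = _
      rw [ih, map_mul, map_pow, hfixζ, haf, pow_succ]
      ring
  have hζa : ζ ^ a = 1 := by
    have h := hiter a
    rw [hord] at h
    replace h : f = ζ ^ a * f := h
    have h2 : ζ ^ a * f = 1 * f := by rw [← h, one_mul]
    exact mul_right_cancel₀ hf h2
  have hd : ζ ^ Nat.gcd (2 * n) a = 1 := pow_gcd_eq_one.mpr ⟨hζ2n, hζa⟩
  have hdvd : Nat.gcd (2 * n) a ∣ 2 := by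
    have : Nat.gcd (2 * n) a = Nat.gcd 2 a :=
      Nat.Coprime.gcd_mul_right_cancel 2 hgcd
    rw [this]
    exact Nat.gcd_dvd_left 2 a
  obtain ⟨c, hc⟩ := hdvd
  have hζ2 : ζ ^ 2 = 1 := by
    rw [hc, pow_mul, hd, one_pow]
  have : (ζ - 1) * (ζ + 1) = 0 := by ring_nf; linear_combination hζ2
  rcases mul_eq_zero.mp this with h | h
  · left; rw [haf, sub_eq_zero.mp h, one_mul]
  · right; rw [haf, eq_neg_of_add_eq_zero_left h]; ring

/-- Let `E` be a field and let `a, n` be positive integers with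
`gcd(n, a) = 1`. Let `α` be a field automorphism of `E` such that `α ^ a = id`
and such that `α` fixes every element `x ∈ E` satisfying `x ^ (2n) = 1`.
If `f ∈ E` is nonzero and `α f ≠ f` and `α f ≠ -f`, then
`α (f ^ n) ≠ f ^ n` and `α (f ^ n) ≠ -(f ^ n)`. -/
theorem stmt_0 (E : Type*) [Field E] (a n : ℕ) (ha : 0 < a) (hn : 0 < n)
    (hgcd : Nat.gcd n a = 1) (α : E ≃+* E) (hord : α ^ a = 1)
    (hfix : ∀ x : E, x ^ (2 * n) = 1 → α x = x)
    (f : E) (hf : f ≠ 0) (h1 : α f ≠ f) (h2 : α f ≠ -f) :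
    α (f ^ n) ≠ f ^ n ∧ α (f ^ n) ≠ -(f ^ n) := by
  constructor
  · intro h
    rcases stmt_0_aux E a n ha hn hgcd α hord hfix f hf 1 (one_pow 2)
      (by rw [h, one_mul]) with hh | hh
    exacts [h1 hh, h2 hh]
  · intro h
    rcases stmt_0_aux E a n ha hn hgcd α hord hfix f hf (-1) (by ring)
      (by rw [h]; ring) with hh | hh
    exacts [h1 hh, h2 hh]
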